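/- Let p be a prime and e ≥ 1. Let m be an integer with 0 ≤ m and 2m ≤ e, let x ∈ M = (ℤ/p^eℤ)² have additive order exactly p^{e−m}, and let K be the subgroup of M generated by the p^m-torsion subgroup {y ∈ M : p^m·y = 0} together with x (so K is maximal isotropic). Let r and q be integers with 0 ≤ r ≤ m and 0 ≤ q ≤ e−2m, and set K' to be the subgroup of M generated by the p^r-torsion subgroup {y ∈ M : p^r·y = 0} together with p^{e−m−r−q}·K. Then: (1) K' has cardinality p^{2r+q}; (2) K' is contained in the p^{2r+q}-torsion subgroup {y ∈ M : p^{2r+q}·y = 0}; and (3) ω(u,v) = 0 for all u, v ∈ K'. -/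

import Mathlib

/-- The `k`-torsion subgroup of an additive commutative group. -/
def skctTors (G : Type*) [AddCommGroup G] (k : ℕ) : AddSubgroup G where
  carrier := {y | k • y = 0}
  zero_mem' := smul_zero k
  add_mem' := by
    intro a b ha hb
    simp only [Set.mem_setOf_eq, smul_add] at *
    rw [ha, hb, add_zero]
  neg_mem' := by
    intro a ha
    simp only [Set.mem_setOf_eq, smul_neg] at *
    rw [ha, neg_zero]

lemma skct_mem_tors {G : Type*} [AddCommGroup G] {k : ℕ} {a : G} :
    a ∈ skctTors G k ↔ k • a = 0 := Iff.rfl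

lemma skct_coe_tors (G : Type*) [AddCommGroup G] (k : ℕ) :
    (skctTors G k : Set G) = {y | k • y = 0} := rfl

lemma skct_tors_prod (A B : Type*) [AddCommGroup A] [AddCommGroup B] (k : ℕ) :
    skctTors (A × B) k = (skctTors A k).prod (skctTors B k) := by
  ext z
  rw [skct_mem_tors, AddSubgroup.mem_prod, skct_mem_tors, skct_mem_tors, Prod.ext_iff]
  simp

lemma skct_dvd_iff (p e j : ℕ) (hp : p.Prime) (hj : j ≤ e) (a : ZMod (p ^ e)) :
    p ^ j • a = 0 ↔ ∃ b : ZMod (p ^ e), a = (p ^ (e - j) : ℕ) * b := by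
  haveI : NeZero (p ^ e) := ⟨pow_ne_zero _ hp.pos.ne'⟩
  rw [nsmul_eq_mul]
  constructor
  · intro h
    have ha : ((a.val : ℕ) : ZMod (p ^ e)) = a := ZMod.natCast_zmod_val a
    rw [← ha, ← Nat.cast_mul, ZMod.natCast_eq_zero_iff] at h
    have h2 : p ^ (e - j) ∣ a.val := by
      rcases h with ⟨c, hc⟩
      refine ⟨c, ?_⟩
      have hpj : 0 < p ^ j := pow_pos hp.pos j
      have hkey : p ^ j * a.val = p ^ j * (p ^ (e - j) * c) := by
        rw [hc, ← mul_assoc, ← pow_add]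
        congr 2
        omega
      exact Nat.eq_of_mul_eq_mul_left hpj hkey
    rcases h2 with ⟨c, hc⟩
    refine ⟨(c : ZMod (p ^ e)), ?_⟩
    rw [← ha, hc]
    push_cast
    ring
  · rintro ⟨b, rfl⟩
    have hz : ((p ^ j : ℕ) : ZMod (p ^ e)) * ((p ^ (e - j) : ℕ) : ZMod (p ^ e)) = 0 := by
      rw [← Nat.cast_mul, ← pow_add, show j + (e - j) = e from by omega, ZMod.natCast_self]
    rw [← mul_assoc, hz, zero_mul]

lemma skct_tors_eq_zmultiples (p e j : ℕ) (hp : p.Prime) (hj : j ≤ e) :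
    skctTors (ZMod (p ^ e)) (p ^ j)
      = AddSubgroup.zmultiples ((p ^ (e - j) : ℕ) : ZMod (p ^ e)) := by
  haveI : NeZero (p ^ e) := ⟨pow_ne_zero _ hp.pos.ne'⟩
  ext a
  rw [AddSubgroup.mem_zmultiples_iff, skct_mem_tors, skct_dvd_iff p e j hp hj]
  constructor
  · rintro ⟨b, rfl⟩
    refine ⟨(b.val : ℤ), ?_⟩
    rw [natCast_zsmul, nsmul_eq_mul, ZMod.natCast_zmod_val]
    ring
  · rintro ⟨k, hk⟩
    refine ⟨(k : ZMod (p ^ e)), ?_⟩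
    rw [← hk, zsmul_eq_mul]
    push_cast
    ring

lemma skct_card_tors (p e j : ℕ) (hp : p.Prime) (hj : j ≤ e) :
    Nat.card (skctTors (ZMod (p ^ e)) (p ^ j)) = p ^ j := by
  haveI : NeZero (p ^ e) := ⟨pow_ne_zero _ hp.pos.ne'⟩
  rw [skct_tors_eq_zmultiples p e j hp hj, Nat.card_zmultiples,
    ZMod.addOrderOf_coe _ (NeZero.ne _),
    Nat.gcd_eq_right (pow_dvd_pow p (Nat.sub_le e j)),
    Nat.pow_div (Nat.sub_le e j) hp.pos]
  congr 1
  omega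

lemma skct_iso_aux (p e : ℕ) (hp : p.Prime) (j k : ℕ) (hjk : j + k ≤ e)
    (u v : ZMod (p ^ e) × ZMod (p ^ e)) (hu : p ^ j • u = 0) (hv : p ^ k • v = 0) :
    u.1 * v.2 - u.2 * v.1 = 0 := by
  haveI : NeZero (p ^ e) := ⟨pow_ne_zero _ hp.pos.ne'⟩
  have hj : j ≤ e := by omega
  have hk : k ≤ e := by omega
  obtain ⟨hu1, hu2⟩ := Prod.ext_iff.mp hu
  obtain ⟨hv1, hv2⟩ := Prod.ext_iff.mp hv
  simp only [Prod.smul_fst, Prod.smul_snd, Prod.fst_zero, Prod.snd_zero] at hu1 hu2 hv1 hv2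
  obtain ⟨a1, ha1⟩ := (skct_dvd_iff p e j hp hj u.1).mp hu1
  obtain ⟨a2, ha2⟩ := (skct_dvd_iff p e j hp hj u.2).mp hu2
  obtain ⟨b1, hb1⟩ := (skct_dvd_iff p e k hp hk v.1).mp hv1
  obtain ⟨b2, hb2⟩ := (skct_dvd_iff p e k hp hk v.2).mp hv2
  have hz : ((p ^ (e - j) : ℕ) : ZMod (p ^ e)) * ((p ^ (e - k) : ℕ) : ZMod (p ^ e)) = 0 := by
    rw [← Nat.cast_mul, ← pow_add, show (e - j) + (e - k) = e + (e - j - k) from by omega,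
      pow_add, Nat.cast_mul, ZMod.natCast_self, zero_mul]
  rw [ha1, ha2, hb1, hb2]
  linear_combination (a1 * b2 - a2 * b1) * hz

/-- The subgroup of vectors pairing to zero with a fixed vector `(a, b)`. -/
def skctAnn (N : ℕ) (a b : ZMod N) : AddSubgroup (ZMod N × ZMod N) where
  carrier := {w | w.1 * b - w.2 * a = 0}
  zero_mem' := by simp
  add_mem' := by
    intro u v hu hv
    simp only [Set.mem_setOf_eq, Prod.fst_add, Prod.snd_add] at *
    linear_combination hu + hv
  neg_mem' := by
    intro u hu
    simp only [Set.mem_setOf_eq, Prod.fst_neg, Prod.snd_neg] at *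
    linear_combination -hu

lemma skct_mem_ann {N : ℕ} {a b : ZMod N} {w : ZMod N × ZMod N} :
    w ∈ skctAnn N a b ↔ w.1 * b - w.2 * a = 0 := Iff.rfl

lemma skct_addOrderOf_nsmul {G : Type*} [AddCommGroup G] (x : G) (n d : ℕ) (hn : 0 < n)
    (hord : addOrderOf x = n * d) : addOrderOf (n • x) = d := by
  have h1 : addOrderOf (n • x) ∣ d := by
    rw [addOrderOf_dvd_iff_nsmul_eq_zero, smul_smul, mul_comm, ← hord]
    exact addOrderOf_nsmul_eq_zero x
  have h2 : d ∣ addOrderOf (n • x) := by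
    have h3 : (n * addOrderOf (n • x)) • x = 0 := by
      rw [mul_comm, mul_smul]
      exact addOrderOf_nsmul_eq_zero (n • x)
    have h4 : n * d ∣ n * addOrderOf (n • x) := by
      rw [← hord]
      exact addOrderOf_dvd_iff_nsmul_eq_zero.mpr h3
    exact (Nat.mul_dvd_mul_iff_left hn).mp h4
  exact Nat.dvd_antisymm h1 h2

/-- Let `K ≤ M = (ℤ/p^eℤ)²` be the maximal isotropic subgroup generated by the
`p^m`-torsion subgroup together with an element `x` of additive order `p^(e-m)`
(where `2m ≤ e`). For `0 ≤ r ≤ m` and `0 ≤ q ≤ e - 2m`, the subgroup `K'` generated by the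
`p^r`-torsion subgroup together with `p^(e-m-r-q)·K` has cardinality `p^(2r+q)`, is contained
in the `p^(2r+q)`-torsion subgroup, and is isotropic for the standard symplectic pairing. -/
theorem sub_kernel_card_torsion_isotropic (p : ℕ) (hp : p.Prime) (e : ℕ) (he : 1 ≤ e)
    (m : ℕ) (hm : 2 * m ≤ e) (x : ZMod (p ^ e) × ZMod (p ^ e))
    (hx : addOrderOf x = p ^ (e - m))
    (K : AddSubgroup (ZMod (p ^ e) × ZMod (p ^ e)))
    (hK : K = AddSubgroup.closure
      ({y : ZMod (p ^ e) × ZMod (p ^ e) | p ^ m • y = 0} ∪ {x}))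
    (r q : ℕ) (hr : r ≤ m) (hq : q ≤ e - 2 * m)
    (K' : AddSubgroup (ZMod (p ^ e) × ZMod (p ^ e)))
    (hK' : K' = AddSubgroup.closure
      ({y : ZMod (p ^ e) × ZMod (p ^ e) | p ^ r • y = 0} ∪
        (fun z => p ^ (e - m - r - q) • z) '' (K : Set (ZMod (p ^ e) × ZMod (p ^ e))))) :
    Nat.card K' = p ^ (2 * r + q) ∧
    (∀ y ∈ K', p ^ (2 * r + q) • y = 0) ∧
    (∀ u ∈ K', ∀ v ∈ K', u.1 * v.2 - u.2 * v.1 = 0) := by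
  haveI : NeZero (p ^ e) := ⟨pow_ne_zero _ hp.pos.ne'⟩
  have hkey : m + r + q ≤ e := by omega
  set s : ℕ := e - m - r - q with hsdef
  set w : ZMod (p ^ e) × ZMod (p ^ e) := p ^ s • x with hw
  -- the multiplication-by-p^s homomorphism
  set φ : (ZMod (p ^ e) × ZMod (p ^ e)) →+ (ZMod (p ^ e) × ZMod (p ^ e)) :=
    { toFun := fun z => p ^ s • z
      map_zero' := smul_zero _
      map_add' := fun a b => smul_add (p ^ s) a b } with hφ
  set Tr : AddSubgroup (ZMod (p ^ e) × ZMod (p ^ e)) :=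
    skctTors (ZMod (p ^ e) × ZMod (p ^ e)) (p ^ r) with hTr
  set Tm : AddSubgroup (ZMod (p ^ e) × ZMod (p ^ e)) :=
    skctTors (ZMod (p ^ e) × ZMod (p ^ e)) (p ^ m) with hTm
  set Z : AddSubgroup (ZMod (p ^ e) × ZMod (p ^ e)) := AddSubgroup.zmultiples w with hZ
  -- image of K under φ
  have hKmap : K.map φ = Tm.map φ ⊔ Z := by
    rw [hK, show ({y : ZMod (p ^ e) × ZMod (p ^ e) | p ^ m • y = 0} ∪ {x})
        = ((Tm : Set (ZMod (p ^ e) × ZMod (p ^ e))) ∪ {x}) from rfl,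
      AddMonoidHom.map_closure, Set.image_union, Set.image_singleton,
      AddSubgroup.closure_union]
    congr 1
    · rw [← AddSubgroup.coe_map, AddSubgroup.closure_eq]
    · rw [← AddSubgroup.zmultiples_eq_closure]
      exact hZ.symm
  have hTmle : Tm.map φ ≤ Tr := by
    rintro _ ⟨t, ht, rfl⟩
    have ht' : p ^ m • t = 0 := ht
    show p ^ r • (p ^ s • t) = 0
    rw [smul_smul, show p ^ r * p ^ s = p ^ (r + s - m) * p ^ m from by
      rw [← pow_add, ← pow_add]; congr 1; omega, mul_smul, ht', smul_zero]
  -- description of K'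
  have hK'sup : K' = Tr ⊔ Z := by
    rw [hK', show ((fun z : ZMod (p ^ e) × ZMod (p ^ e) => p ^ s • z)
          '' (K : Set (ZMod (p ^ e) × ZMod (p ^ e))))
        = ((K.map φ : AddSubgroup (ZMod (p ^ e) × ZMod (p ^ e)))
          : Set (ZMod (p ^ e) × ZMod (p ^ e))) from (AddSubgroup.coe_map φ K).symm,
      show {y : ZMod (p ^ e) × ZMod (p ^ e) | p ^ r • y = 0}
        = (Tr : Set (ZMod (p ^ e) × ZMod (p ^ e))) from rfl,
      AddSubgroup.closure_union, AddSubgroup.closure_eq, AddSubgroup.closure_eq, hKmap,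
      ← sup_assoc, sup_eq_left.mpr hTmle]
  -- order of w
  have hword : addOrderOf w = p ^ (r + q) := by
    refine skct_addOrderOf_nsmul x (p ^ s) (p ^ (r + q)) (pow_pos hp.pos s) ?_
    rw [hx, ← pow_add]
    congr 1
    omega
  have hw0 : p ^ (r + q) • w = 0 := by
    rw [← hword]
    exact addOrderOf_nsmul_eq_zero w
  -- intersection
  have hinf : Tr ⊓ Z = AddSubgroup.zmultiples ((p ^ q) • w) := by
    ext z
    constructor
    · intro hz
      obtain ⟨hz1, hz2⟩ := AddSubgroup.mem_inf.mp hz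
      obtain ⟨k, hk⟩ := AddSubgroup.mem_zmultiples_iff.mp hz2
      have hz1' : p ^ r • z = 0 := hz1
      rw [← hk] at hz1' ⊢
      have hcomb : (((p ^ r : ℕ) : ℤ) * k) • w = 0 := by
        rw [mul_smul, natCast_zsmul]
        exact hz1'
      have hdvd : ((p ^ (r + q) : ℕ) : ℤ) ∣ ((p ^ r : ℕ) : ℤ) * k := by
        rw [← hword]
        exact addOrderOf_dvd_iff_zsmul_eq_zero.mpr hcomb
      obtain ⟨c, hc⟩ := hdvd
      have hprne : ((p ^ r : ℕ) : ℤ) ≠ 0 := by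
        exact_mod_cast (pow_ne_zero r hp.pos.ne')
      have hkc : k = ((p ^ q : ℕ) : ℤ) * c := by
        have h2 : ((p ^ r : ℕ) : ℤ) * k = ((p ^ r : ℕ) : ℤ) * (((p ^ q : ℕ) : ℤ) * c) := by
          rw [hc]
          push_cast
          ring
        exact mul_left_cancel₀ hprne h2
      refine AddSubgroup.mem_zmultiples_iff.mpr ⟨c, ?_⟩
      rw [hkc]
      simp only [← natCast_zsmul, smul_smul]
      congr 1
      ring
    · intro hz
      obtain ⟨k, hk⟩ := AddSubgroup.mem_zmultiples_iff.mp hz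
      rw [← hk]
      refine AddSubgroup.mem_inf.mpr ⟨?_, ?_⟩
      · show p ^ r • (k • p ^ q • w) = 0
        have hsm : p ^ r • (k • p ^ q • w) = k • (p ^ (r + q)) • w := by
          simp only [← natCast_zsmul, smul_smul]
          congr 1
          push_cast
          ring
        rw [hsm, hw0, smul_zero]
      · refine AddSubgroup.mem_zmultiples_iff.mpr ⟨k * (p ^ q : ℕ), ?_⟩
        rw [mul_smul, natCast_zsmul]
  -- cardinalities
  have hcTr : Nat.card Tr = p ^ (2 * r) := by
    rw [hTr, skct_tors_prod,
      Nat.card_congr (AddSubgroup.prodEquiv _ _).toEquiv, Nat.card_prod,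
      skct_card_tors p e r hp (by omega), ← pow_add]
    congr 1
    omega
  have hcZ : Nat.card Z = p ^ (r + q) := by
    rw [hZ, Nat.card_zmultiples, hword]
  have hcInf : Nat.card (Tr ⊓ Z : AddSubgroup (ZMod (p ^ e) × ZMod (p ^ e))) = p ^ r := by
    rw [hinf, Nat.card_zmultiples,
      skct_addOrderOf_nsmul w (p ^ q) (p ^ r) (pow_pos hp.pos q)
        (by rw [hword, ← pow_add]; congr 1; omega)]
  have hTrle : Tr ≤ K' := by rw [hK'sup]; exact le_sup_left
  have e1 : Nat.card Tr * Tr.relIndex K' = Nat.card K' := by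
    rw [← AddSubgroup.relIndex_bot_left Tr, ← AddSubgroup.relIndex_bot_left K']
    exact AddSubgroup.relIndex_mul_relIndex ⊥ Tr K' bot_le hTrle
  have e2 : Tr.relIndex K' = Tr.relIndex Z := by
    rw [hK'sup, AddSubgroup.relIndex_sup_left]
  have e3 : Nat.card (Tr ⊓ Z : AddSubgroup (ZMod (p ^ e) × ZMod (p ^ e))) * Tr.relIndex Z
      = Nat.card Z := by
    rw [← AddSubgroup.relIndex_bot_left (Tr ⊓ Z), ← AddSubgroup.relIndex_bot_left Z,
      ← AddSubgroup.inf_relIndex_right Tr Z]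
    exact AddSubgroup.relIndex_mul_relIndex ⊥ (Tr ⊓ Z) Z bot_le inf_le_right
  have hrelZ : Tr.relIndex Z = p ^ q := by
    rw [hcInf, hcZ] at e3
    have h4 : p ^ r * Tr.relIndex Z = p ^ r * p ^ q := by rw [e3, ← pow_add]
    exact Nat.eq_of_mul_eq_mul_left (pow_pos hp.pos r) h4
  have hcard : Nat.card K' = p ^ (2 * r + q) := by
    rw [← e1, e2, hrelZ, hcTr, ← pow_add]
  refine ⟨hcard, ?_, ?_⟩
  · -- torsion
    intro z hz
    have hle : K' ≤ skctTors (ZMod (p ^ e) × ZMod (p ^ e)) (p ^ (2 * r + q)) := by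
      rw [hK'sup]
      refine sup_le ?_ ?_
      · intro t ht
        have ht' : p ^ r • t = 0 := ht
        show p ^ (2 * r + q) • t = 0
        rw [show (2 * r + q) = (r + q) + r from by omega, pow_add, mul_smul, ht', smul_zero]
      · rintro _ ⟨k, rfl⟩
        show p ^ (2 * r + q) • (k • w) = 0
        have hsm : p ^ (2 * r + q) • (k • w) = (k * ((p ^ r : ℕ) : ℤ)) • (p ^ (r + q)) • w := by
          simp only [← natCast_zsmul, smul_smul]
          congr 1
          push_cast
          ring
        rw [hsm, hw0, smul_zero]
    exact hle hz
  · -- isotropy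
    have hK'cl : K' = AddSubgroup.closure
        ((Tr : Set (ZMod (p ^ e) × ZMod (p ^ e))) ∪ {w}) := by
      rw [AddSubgroup.closure_union, AddSubgroup.closure_eq, hK'sup, hZ,
        ← AddSubgroup.zmultiples_eq_closure]
    have h2rq : 2 * r + q ≤ e := by omega
    have hgen : ∀ z ∈ ((Tr : Set (ZMod (p ^ e) × ZMod (p ^ e))) ∪ {w}),
        ∀ g ∈ ((Tr : Set (ZMod (p ^ e) × ZMod (p ^ e))) ∪ {w}),
        z.1 * g.2 - z.2 * g.1 = 0 := by
      rintro z (hz | hz) g (hg | hg)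
      · exact skct_iso_aux p e hp r r (by omega) z g hz hg
      · rw [Set.mem_singleton_iff] at hg
        subst hg
        exact skct_iso_aux p e hp r (r + q) (by omega) z w hz hw0
      · rw [Set.mem_singleton_iff] at hz
        subst hz
        exact skct_iso_aux p e hp (r + q) r (by omega) w g hw0 hg
      · rw [Set.mem_singleton_iff] at hz hg
        subst hz; subst hg
        exact sub_eq_zero_of_eq (mul_comm _ _)
    have h1 : ∀ g ∈ ((Tr : Set (ZMod (p ^ e) × ZMod (p ^ e))) ∪ {w}),
        ∀ u' ∈ K', u'.1 * g.2 - u'.2 * g.1 = 0 := by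
      intro g hg u' hu'
      have hle : K' ≤ skctAnn (p ^ e) g.1 g.2 := by
        rw [hK'cl]
        refine (AddSubgroup.closure_le _).mpr ?_
        intro z hz
        exact (skct_mem_ann).mpr (hgen z hz g hg)
      exact (skct_mem_ann).mp (hle hu')
    intro u hu v hv
    have h2 : K' ≤ skctAnn (p ^ e) u.1 u.2 := by
      rw [hK'cl]
      refine (AddSubgroup.closure_le _).mpr ?_
      intro g hg
      refine (skct_mem_ann).mpr ?_
      have h5 := h1 g hg u hu
      linear_combination -h5
    have hv2 := (skct_mem_ann).mp (h2 hv)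
    linear_combination -hv2
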